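/- If every entry of the vector ν·𝟏 − W x* is nonnegative, then x̃ ≥ x* entrywise, where x̃ = (I − mC)^{-1}·[Λ x(0) + (1−m) ν (I−Λ) 𝟏] and x* = (I − C)^{-1} Λ x(0); symmetrically, if every entry of ν·𝟏 − W x* is nonpositive, then x̃ ≤ x* entrywise. -/

import Mathlib

open Matrix BigOperators

attribute [local instance]
  Matrix.linftyOpNormedAddCommGroup Matrix.linftyOpNormedRing
  Matrix.linftyOpNormedSpace Matrix.linftyOpNormedAlgebra

private lemma pow_entry_nonneg {N : ℕ} {B : Matrix (Fin N) (Fin N) ℝ}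
    (hB : ∀ i j, 0 ≤ B i j) : ∀ n i j, 0 ≤ (B ^ n) i j := by
  intro n
  induction n with
  | zero =>
    intro i j
    simp only [pow_zero, Matrix.one_apply]
    split <;> norm_num
  | succ n ih =>
    intro i j
    rw [pow_succ, Matrix.mul_apply]
    exact Finset.sum_nonneg fun k _ => mul_nonneg (ih i k) (hB k j)

private lemma norm_lt_one {N : ℕ} {B : Matrix (Fin N) (Fin N) ℝ}
    (hB : ∀ i j, 0 ≤ B i j) (hrow : ∀ i, ∑ j, B i j < 1) : ‖B‖ < 1 := by
  rw [Matrix.linfty_opNorm_def]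
  have h : (Finset.univ : Finset (Fin N)).sup (fun i => ∑ j, ‖B i j‖₊) < 1 := by
    rw [Finset.sup_lt_iff (by norm_num : (⊥ : NNReal) < 1)]
    intro i _
    have : ((∑ j, ‖B i j‖₊ : NNReal) : ℝ) < 1 := by
      push_cast
      have : ∀ j, ‖B i j‖ = B i j := by
        intro j
        rw [Real.norm_eq_abs, abs_of_nonneg (hB i j)]
      rw [Finset.sum_congr rfl fun j _ => this j]
      exact hrow i
    exact_mod_cast this
  exact_mod_cast h

private lemma neumann {N : ℕ} {B : Matrix (Fin N) (Fin N) ℝ}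
    (hB : ∀ i j, 0 ≤ B i j) (hrow : ∀ i, ∑ j, B i j < 1) :
    IsUnit (1 - B) ∧ ∀ i j, 0 ≤ (1 - B)⁻¹ i j := by
  have hn : ‖B‖ < 1 := norm_lt_one hB hrow
  have hU : IsUnit (1 - B) := isUnit_one_sub_of_norm_lt_one hn
  refine ⟨hU, fun i j => ?_⟩
  have hinv : (1 - B)⁻¹ = ∑' n : ℕ, B ^ n := by
    rw [Matrix.nonsing_inv_eq_ringInverse, ← geom_series_eq_inverse B hn]
    rfl
  have hs : HasSum (fun n : ℕ => B ^ n) (∑' n : ℕ, B ^ n) :=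
    (summable_geometric_of_norm_lt_one hn).hasSum
  let e : Matrix (Fin N) (Fin N) ℝ →ₗ[ℝ] ℝ :=
    { toFun := fun M => M i j
      map_add' := fun _ _ => rfl
      map_smul' := fun _ _ => rfl }
  have he : Continuous e := e.continuous_of_finiteDimensional
  have hs' : HasSum (fun n : ℕ => (B ^ n) i j) ((∑' n : ℕ, B ^ n) i j) :=
    hs.map e.toAddMonoidHom he
  rw [hinv, ← hs'.tsum_eq]
  exact tsum_nonneg fun n => pow_entry_nonneg hB n i j

theorem stmt9 (N : ℕ) (hN : 1 ≤ N)
    (W : Matrix (Fin N) (Fin N) ℝ)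
    (hWpos : ∀ i j, 0 ≤ W i j) (hWrow : ∀ i, ∑ j, W i j = 1)
    (lam : Fin N → ℝ) (hlam : ∀ i, lam i ∈ Set.Ioo (0 : ℝ) 1)
    (m : ℝ) (hm : m ∈ Set.Ioo (0 : ℝ) 1) (ν : ℝ) (hν : ν ∈ Set.Icc (0 : ℝ) 1)
    (C : Matrix (Fin N) (Fin N) ℝ) (hC : C = (1 - Matrix.diagonal lam) * W)
    (x0 : Fin N → ℝ)
    (xt : Fin N → ℝ)
    (hxt : xt = (1 - m • C)⁻¹ *ᵥ
      (Matrix.diagonal lam *ᵥ x0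
        + ((1 - m) * ν) • ((1 - Matrix.diagonal lam) *ᵥ (1 : Fin N → ℝ))))
    (xs : Fin N → ℝ) (hxs : xs = (1 - C)⁻¹ *ᵥ (Matrix.diagonal lam *ᵥ x0)) :
    ((∀ i, 0 ≤ (ν • (1 : Fin N → ℝ) - W *ᵥ xs) i) → ∀ i, xs i ≤ xt i) ∧
    ((∀ i, (ν • (1 : Fin N → ℝ) - W *ᵥ xs) i ≤ 0) → ∀ i, xt i ≤ xs i) := by
  obtain ⟨hm0, hm1⟩ := hm
  have hdiag : (1 : Matrix (Fin N) (Fin N) ℝ) - Matrix.diagonal lam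
      = Matrix.diagonal (fun i => 1 - lam i) := by
    rw [← Matrix.diagonal_one, Matrix.diagonal_sub]
  have hC' : C = Matrix.diagonal (fun i => 1 - lam i) * W := by rw [hC, hdiag]
  have hCentry : ∀ i j, C i j = (1 - lam i) * W i j := by
    intro i j; rw [hC', Matrix.diagonal_mul]
  have hCpos : ∀ i j, 0 ≤ C i j := fun i j => by
    rw [hCentry]
    exact mul_nonneg (by linarith [(hlam i).2]) (hWpos i j)
  have hCrow : ∀ i, ∑ j, C i j = 1 - lam i := by
    intro i
    simp_rw [hCentry, ← Finset.mul_sum, hWrow i, mul_one]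
  -- units
  have hU1 : IsUnit (1 - C) :=
    (neumann hCpos (fun i => by rw [hCrow]; linarith [(hlam i).1])).1
  have hmCpos : ∀ i j, 0 ≤ (m • C) i j := fun i j => by
    simpa using mul_nonneg hm0.le (hCpos i j)
  have hmCrow : ∀ i, ∑ j, (m • C) i j < 1 := by
    intro i
    simp only [Matrix.smul_apply, smul_eq_mul, ← Finset.mul_sum, hCrow]
    nlinarith [(hlam i).1, (hlam i).2]
  obtain ⟨hUm, hMinv⟩ := neumann hmCpos hmCrow
  -- (1 - C) *ᵥ xs = Λ x0
  have hxs1 : (1 - C) *ᵥ xs = Matrix.diagonal lam *ᵥ x0 := by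
    rw [hxs, Matrix.mulVec_mulVec,
      Matrix.mul_nonsing_inv _ ((Matrix.isUnit_iff_isUnit_det _).1 hU1),
      Matrix.one_mulVec]
  set v : Fin N → ℝ := ν • (1 : Fin N → ℝ) - W *ᵥ xs with hv
  set d : Fin N → ℝ := fun j => (1 - m) * ((1 - lam j) * v j) with hd
  -- key identity at the level of the RHS vector
  have hb : Matrix.diagonal lam *ᵥ x0
      + ((1 - m) * ν) • ((1 - Matrix.diagonal lam) *ᵥ (1 : Fin N → ℝ))
      = (1 - m • C) *ᵥ xs + d := by
    funext i
    have h1 : ((1 - Matrix.diagonal lam) *ᵥ (1 : Fin N → ℝ)) i = 1 - lam i := by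
      rw [hdiag, Matrix.mulVec_diagonal]; simp
    have h2 : (C *ᵥ xs) i = (1 - lam i) * (W *ᵥ xs) i := by
      rw [hC', ← Matrix.mulVec_mulVec, Matrix.mulVec_diagonal]
    have h3 : (Matrix.diagonal lam *ᵥ x0) i = xs i - (C *ᵥ xs) i := by
      rw [← hxs1, Matrix.sub_mulVec, Matrix.one_mulVec]; rfl
    have h4 : ((1 - m • C) *ᵥ xs) i = xs i - m * (C *ᵥ xs) i := by
      rw [Matrix.sub_mulVec, Matrix.one_mulVec, Matrix.smul_mulVec]
      simp [Pi.sub_apply]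
    simp only [Pi.add_apply, Pi.smul_apply, smul_eq_mul, h1, h3, h4, hd]
    have hvi : v i = ν - (W *ᵥ xs) i := by simp [hv, Pi.sub_apply]
    rw [hvi, h2]; ring
  -- xt = xs + Minv *ᵥ d
  have hxt' : xt = xs + (1 - m • C)⁻¹ *ᵥ d := by
    rw [hxt, hb, Matrix.mulVec_add, Matrix.mulVec_mulVec,
      Matrix.nonsing_inv_mul _ ((Matrix.isUnit_iff_isUnit_det _).1 hUm),
      Matrix.one_mulVec]
  have hdiff : ∀ i, xt i - xs i = ∑ j, (1 - m • C)⁻¹ i j * d j := by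
    intro i
    rw [hxt']
    simp [Matrix.mulVec, dotProduct]
  constructor
  · intro hpos i
    have : 0 ≤ xt i - xs i := by
      rw [hdiff i]
      refine Finset.sum_nonneg fun j _ => mul_nonneg (hMinv i j) ?_
      have := hpos j
      have h1l : (0:ℝ) ≤ 1 - lam j := by linarith [(hlam j).2]
      exact mul_nonneg (by linarith) (mul_nonneg h1l this)
    linarith
  · intro hneg i
    have : xt i - xs i ≤ 0 := by
      rw [hdiff i]
      refine Finset.sum_nonpos fun j _ => mul_nonpos_of_nonneg_of_nonpos (hMinv i j) ?_
      have := hneg j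
      have h1l : (0:ℝ) ≤ 1 - lam j := by linarith [(hlam j).2]
      have h1m : (0:ℝ) ≤ 1 - m := by linarith
      exact mul_nonpos_of_nonneg_of_nonpos h1m (mul_nonpos_of_nonneg_of_nonpos h1l this)
    linarith
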